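/- Let X be a real n×p matrix whose columns are linearly independent, Y ∈ ℝⁿ, λ ≥ 0, α ∈ (0, 1], let C be a p×p real diagonal matrix with diagonal entries in {−1, 0, 1}, set S(λ) := C Xᵀ X C + λ(1−α) C², let S(λ)⁻ satisfy the four Penrose equations for S(λ) with S(λ) S(λ)⁻ = S(λ)⁻ S(λ) = C², and put û := S(λ)⁻ (C Xᵀ Y − αλ C² 𝟙). If every entry of û is nonnegative, then β̂ := C û equals C S(λ)⁻ C (Xᵀ Y − αλ C 𝟙) and β̂ minimizes the elastic net criterion over the closed orthant determined by C: for every u ∈ ℝᵖ with nonnegative entries, E(β̂) ≤ E(C u), where E(β) = ½‖Y − Xβ‖₂² + λα‖β‖₁ + λ(1−α)/2 · ‖β‖₂². -/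
import Mathlib


open Matrix BigOperators

/-- `B` is a Moore–Penrose generalized inverse of `A`:
the four Penrose equations hold. -/
def IsMoorePenrose {p : ℕ} (A B : Matrix (Fin p) (Fin p) ℝ) : Prop :=
  A * B * A = A ∧ B * A * B = B ∧ (A * B)ᵀ = A * B ∧ (B * A)ᵀ = B * A

theorem orthant_elastic_net_estimate_minimizes_on_orthant {n p : ℕ}
    (X : Matrix (Fin n) (Fin p) ℝ)
    (hX : LinearIndependent ℝ (fun j : Fin p => fun i : Fin n => X i j))
    (Y : Fin n → ℝ) (lam α : ℝ) (hlam : 0 ≤ lam) (hα : α ∈ Set.Ioc (0 : ℝ) 1)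
    (C : Matrix (Fin p) (Fin p) ℝ) (hdiag : C.IsDiag)
    (hent : ∀ i, C i i = -1 ∨ C i i = 0 ∨ C i i = 1)
    (Slam Sinv : Matrix (Fin p) (Fin p) ℝ)
    (hSlam : Slam = C * Xᵀ * X * C + (lam * (1 - α)) • (C * C))
    (hMP : IsMoorePenrose Slam Sinv)
    (hleft : Slam * Sinv = C * C)
    (hright : Sinv * Slam = C * C)
    (uhat : Fin p → ℝ)
    (huhat : uhat = Sinv.mulVec ((C * Xᵀ).mulVec Y - (α * lam) • (C * C).mulVec (fun _ => (1 : ℝ))))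
    (hpos : ∀ j, 0 ≤ uhat j)
    (E : (Fin p → ℝ) → ℝ)
    (hE : ∀ β, E β = (1 / 2) * ∑ i, (Y i - X.mulVec β i) ^ 2
        + lam * α * ∑ j, |β j|
        + lam * (1 - α) / 2 * ∑ j, (β j) ^ 2) :
    C.mulVec uhat
        = (C * Sinv * C).mulVec (Xᵀ.mulVec Y - (α * lam) • C.mulVec (fun _ => (1 : ℝ)))
    ∧ ∀ u : Fin p → ℝ, (∀ j, 0 ≤ u j) → E (C.mulVec uhat) ≤ E (C.mulVec u) := by
  have hdC : C = Matrix.diagonal (fun j => C j j) := hdiag.diagonal_diag.symm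
  have hCT : Cᵀ = C := by rw [hdC]; exact Matrix.diagonal_transpose _
  have hCu : ∀ (v : Fin p → ℝ) (j : Fin p), (C *ᵥ v) j = C j j * v j := by
    intro v j
    conv_lhs => rw [hdC]
    exact Matrix.mulVec_diagonal _ _ _
  set o : Fin p → ℝ := fun _ => (1 : ℝ) with ho
  set z : Fin p → ℝ := Xᵀ *ᵥ Y - (α * lam) • (C *ᵥ o) with hz
  set b : Fin p → ℝ := (C * Xᵀ) *ᵥ Y - (α * lam) • ((C * C) *ᵥ o) with hb
  have hbz : b = C *ᵥ z := by
    rw [hb, hz, Matrix.mulVec_sub, Matrix.mulVec_smul, Matrix.mulVec_mulVec,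
      Matrix.mulVec_mulVec]
  have hCb : (C * C) *ᵥ b = b := by
    funext j
    rw [← Matrix.mulVec_mulVec, hCu, hCu, hbz, hCu]
    rcases hent j with h | h | h <;> rw [h] <;> ring
  have hSu : Slam *ᵥ uhat = b := by
    rw [huhat, Matrix.mulVec_mulVec, hleft, hCb]
  constructor
  · rw [huhat, Matrix.mulVec_mulVec, hbz, Matrix.mulVec_mulVec]
  · intro u hu
    set w : Fin p → ℝ := u - uhat with hwdef
    have huw : ∀ j, u j = uhat j + w j := fun j => by simp [hwdef]
    set r : Fin n → ℝ := Y - (X * C) *ᵥ uhat with hr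
    set t : Fin n → ℝ := (X * C) *ᵥ w with ht
    have hXC : ∀ (v : Fin p → ℝ), X *ᵥ (C *ᵥ v) = (X * C) *ᵥ v := fun v =>
      Matrix.mulVec_mulVec v X C
    -- decomposition of residual
    have hres : ∀ i, Y i - (X *ᵥ (C *ᵥ u)) i = r i - t i := by
      intro i
      have hce : C *ᵥ u = C *ᵥ uhat + C *ᵥ w := by
        have h' : uhat + w = u := by funext j; simp [hwdef]
        rw [← Matrix.mulVec_add, h']
      rw [hce, Matrix.mulVec_add, hXC, hXC]
      simp [hr, ht]
      ring
    -- abs sums for nonneg vectors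
    have habs : ∀ (v : Fin p → ℝ), (∀ j, 0 ≤ v j) →
        ∑ j, |(C *ᵥ v) j| = ∑ j, (C j j) ^ 2 * v j := by
      intro v hv
      refine Finset.sum_congr rfl fun j _ => ?_
      rw [hCu, abs_mul, abs_of_nonneg (hv j)]
      rcases hent j with h | h | h <;> rw [h] <;> norm_num
    have hsq : ∀ (v : Fin p → ℝ),
        ∑ j, ((C *ᵥ v) j) ^ 2 = ∑ j, (C j j) ^ 2 * (v j) ^ 2 := by
      intro v
      refine Finset.sum_congr rfl fun j _ => ?_
      rw [hCu]; ring
    -- bracket is zero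
    have hzero : lam * α * (∑ j, (C j j) ^ 2 * w j)
        + lam * (1 - α) * (∑ j, (C j j) ^ 2 * (uhat j * w j))
        - (∑ i, r i * t i) = 0 := by
      have hrt : ∑ i, r i * t i
          = ((C * Xᵀ) *ᵥ Y - (C * Xᵀ * X * C) *ᵥ uhat) ⬝ᵥ w := by
        have : ∑ i, r i * t i = r ⬝ᵥ t := rfl
        rw [this, ht, dotProduct_mulVec]
        congr 1
        rw [← Matrix.mulVec_transpose, Matrix.transpose_mul, hCT, hr,
          Matrix.mulVec_sub, Matrix.mulVec_mulVec, ← Matrix.mul_assoc]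
      have h1 : (∑ j, (C j j) ^ 2 * w j) = ((C * C) *ᵥ o) ⬝ᵥ w := by
        refine Finset.sum_congr rfl fun j _ => ?_
        rw [← Matrix.mulVec_mulVec, hCu, hCu, ho]
        ring
      have h2 : (∑ j, (C j j) ^ 2 * (uhat j * w j)) = ((C * C) *ᵥ uhat) ⬝ᵥ w := by
        refine Finset.sum_congr rfl fun j _ => ?_
        rw [← Matrix.mulVec_mulVec, hCu, hCu]
        ring
      have hgw : (Slam *ᵥ uhat - b) ⬝ᵥ w = 0 := by
        rw [hSu]; simp
      rw [hrt, h1, h2]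
      rw [hSlam, Matrix.add_mulVec, Matrix.smul_mulVec, hb] at hgw
      rw [sub_dotProduct, add_dotProduct, smul_dotProduct,
        sub_dotProduct, smul_dotProduct] at hgw
      rw [sub_dotProduct]
      rw [smul_eq_mul, smul_eq_mul] at hgw
      linarith
    -- expand E at both points
    rw [hE, hE]
    have e1 : ∑ i, (Y i - (X *ᵥ (C *ᵥ u)) i) ^ 2
        = ∑ i, r i ^ 2 - 2 * ∑ i, r i * t i + ∑ i, t i ^ 2 := by
      calc ∑ i, (Y i - (X *ᵥ (C *ᵥ u)) i) ^ 2
          = ∑ i, (r i ^ 2 - 2 * (r i * t i) + t i ^ 2) :=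
            Finset.sum_congr rfl fun i _ => by rw [hres i]; ring
        _ = _ := by
            rw [Finset.sum_add_distrib, Finset.sum_sub_distrib, ← Finset.mul_sum]
    have e0 : ∑ i, (Y i - (X *ᵥ (C *ᵥ uhat)) i) ^ 2 = ∑ i, r i ^ 2 := by
      refine Finset.sum_congr rfl fun i _ => ?_
      rw [hXC, hr]
      simp
    have e2 : ∑ j, (C j j) ^ 2 * u j
        = ∑ j, (C j j) ^ 2 * uhat j + ∑ j, (C j j) ^ 2 * w j := by
      rw [← Finset.sum_add_distrib]
      refine Finset.sum_congr rfl fun j _ => ?_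
      rw [huw j]; ring
    have e3 : ∑ j, (C j j) ^ 2 * (u j) ^ 2
        = ∑ j, (C j j) ^ 2 * (uhat j) ^ 2 + 2 * ∑ j, (C j j) ^ 2 * (uhat j * w j)
          + ∑ j, (C j j) ^ 2 * (w j) ^ 2 := by
      rw [Finset.mul_sum, ← Finset.sum_add_distrib, ← Finset.sum_add_distrib]
      refine Finset.sum_congr rfl fun j _ => ?_
      rw [huw j]; ring
    have hSt : 0 ≤ ∑ i, t i ^ 2 := Finset.sum_nonneg fun i _ => sq_nonneg _
    have hQw : 0 ≤ lam * (1 - α) / 2 * ∑ j, (C j j) ^ 2 * (w j) ^ 2 := by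
      apply mul_nonneg
      · have := hα.2
        nlinarith
      · exact Finset.sum_nonneg fun j _ => mul_nonneg (sq_nonneg _) (sq_nonneg _)
    rw [habs u hu, habs uhat hpos, hsq u, hsq uhat, e0, e1, e2, e3]
    nlinarith [hzero, hSt, hQw]
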